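/- Let (λ_k)_{k∈ℤ} be a sequence of distinct complex numbers, α ≥ 0, and let f̂ = [f̂_{k,l}] satisfy Σ_{k,l} (1+k²+l²)^α |f̂_{k,l}(0)|² < ∞. Define f̂_{k,l}(t) = f̂_{k,l}(0)·exp((conj(λ_k)λ_l − |λ_k|²/2 − |λ_l|²/2)t) for t ≥ 0. Then the function t ↦ Σ_{k,l} (1+k²+l²)^α |f̂_{k,l}(t)|² is nonincreasing in t, and its limit as t → ∞ equals Σ_{k∈ℤ} (1+2k²)^α |f̂_{k,k}(0)|². -/

import Mathlib

open scoped ComplexConjugate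
open Filter

/-- The Sobolev α-weight on ℤ². -/
noncomputable def sobolevWeight (α : ℝ) (k l : ℤ) : ℝ := (1 + (k:ℝ)^2 + (l:ℝ)^2) ^ α

lemma re_eq_neg (a b : ℂ) :
    ((conj a * b - (‖a‖ ^ 2 / 2 : ℝ) - (‖b‖ ^ 2 / 2 : ℝ)) : ℂ).re
      = -(‖a - b‖ ^ 2) / 2 := by
  have h := norm_sub_sq_real a b
  rw [Complex.inner] at h
  simp only [Complex.sub_re, Complex.ofReal_re]
  rw [mul_comm b] at h
  linarith

theorem diagonal_lindblad_decay (α : ℝ) (hα : 0 ≤ α) (lam : ℤ → ℂ)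
    (hlam : Function.Injective lam) (f0 : ℤ → ℤ → ℂ)
    (hf0 : Summable fun kl : ℤ × ℤ => sobolevWeight α kl.1 kl.2 * ‖f0 kl.1 kl.2‖ ^ 2)
    (F : ℝ → ℤ → ℤ → ℂ)
    (hF : ∀ (t : ℝ) (k l : ℤ), F t k l =
      f0 k l * Complex.exp ((conj (lam k) * lam l
        - (‖lam k‖ ^ 2 / 2 : ℝ) - (‖lam l‖ ^ 2 / 2 : ℝ)) * t)) :
    AntitoneOn (fun t : ℝ =>
        ∑' kl : ℤ × ℤ, sobolevWeight α kl.1 kl.2 * ‖F t kl.1 kl.2‖ ^ 2) (Set.Ici 0) ∧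
    Tendsto (fun t : ℝ =>
        ∑' kl : ℤ × ℤ, sobolevWeight α kl.1 kl.2 * ‖F t kl.1 kl.2‖ ^ 2) atTop
      (nhds (∑' k : ℤ, (1 + 2 * (k:ℝ) ^ 2) ^ α * ‖f0 k k‖ ^ 2)) := by
  set c : ℤ → ℤ → ℝ := fun k l => -(‖lam k - lam l‖ ^ 2) with hc
  have hterm : ∀ (t : ℝ) (k l : ℤ),
      sobolevWeight α k l * ‖F t k l‖ ^ 2
        = sobolevWeight α k l * ‖f0 k l‖ ^ 2 * Real.exp (c k l * t) := by
    intro t k l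
    have : ((conj (lam k) * lam l - (‖lam k‖ ^ 2 / 2 : ℝ) - (‖lam l‖ ^ 2 / 2 : ℝ))
        * (t : ℂ)).re = (-(‖lam k - lam l‖ ^ 2) / 2) * t := by
      rw [Complex.mul_re, Complex.ofReal_re, Complex.ofReal_im, re_eq_neg]
      ring
    rw [hF, norm_mul, Complex.norm_exp, this,
      mul_pow, sq (Real.exp _), ← Real.exp_add]
    ring_nf
    simp only [hc]
    ring_nf
  have hcnonpos : ∀ k l, c k l ≤ 0 := fun k l => neg_nonpos.2 (by positivity)
  have hw : ∀ k l : ℤ, 0 ≤ sobolevWeight α k l := by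
    intro k l
    apply Real.rpow_nonneg
    positivity
  have hnn : ∀ (t : ℝ) (k l : ℤ),
      0 ≤ sobolevWeight α k l * ‖f0 k l‖ ^ 2 * Real.exp (c k l * t) := by
    intro t k l
    have := hw k l
    positivity
  -- bound at time t ≥ 0 by time 0 data
  have hle : ∀ {t : ℝ}, 0 ≤ t → ∀ k l : ℤ,
      sobolevWeight α k l * ‖f0 k l‖ ^ 2 * Real.exp (c k l * t)
        ≤ sobolevWeight α k l * ‖f0 k l‖ ^ 2 := by
    intro t ht k l
    have h1 : Real.exp (c k l * t) ≤ 1 := by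
      apply Real.exp_le_one_iff.2
      exact mul_nonpos_of_nonpos_of_nonneg (hcnonpos k l) ht
    calc sobolevWeight α k l * ‖f0 k l‖ ^ 2 * Real.exp (c k l * t)
        ≤ sobolevWeight α k l * ‖f0 k l‖ ^ 2 * 1 := by
          apply mul_le_mul_of_nonneg_left h1
          have := hw k l; positivity
      _ = _ := mul_one _
  have hsum : ∀ {t : ℝ}, 0 ≤ t → Summable (fun kl : ℤ × ℤ =>
      sobolevWeight α kl.1 kl.2 * ‖f0 kl.1 kl.2‖ ^ 2 * Real.exp (c kl.1 kl.2 * t)) := by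
    intro t ht
    exact hf0.of_nonneg_of_le (fun kl => hnn t kl.1 kl.2)
      (fun kl => hle ht kl.1 kl.2)
  constructor
  · intro s hs t ht hst
    simp only
    have h1 : ∀ kl : ℤ × ℤ, sobolevWeight α kl.1 kl.2 * ‖F t kl.1 kl.2‖ ^ 2
        ≤ sobolevWeight α kl.1 kl.2 * ‖F s kl.1 kl.2‖ ^ 2 := by
      intro kl
      rw [hterm, hterm]
      apply mul_le_mul_of_nonneg_left _ (by have := hw kl.1 kl.2; positivity)
      exact Real.exp_le_exp.2 (mul_le_mul_of_nonpos_left hst (hcnonpos kl.1 kl.2))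
    apply Summable.tsum_le_tsum h1
    · simpa only [hterm] using hsum (le_trans hs hst)
    · simpa only [hterm] using hsum hs
  · -- limit
    have hdiag : (∑' k : ℤ, (1 + 2 * (k:ℝ) ^ 2) ^ α * ‖f0 k k‖ ^ 2)
        = ∑' kl : ℤ × ℤ, (if kl.1 = kl.2 then
            sobolevWeight α kl.1 kl.2 * ‖f0 kl.1 kl.2‖ ^ 2 else 0) := by
      symm
      apply tsum_eq_tsum_of_ne_zero_bij
        (fun k : Function.support (fun k : ℤ => (1 + 2 * (k:ℝ) ^ 2) ^ α * ‖f0 k k‖ ^ 2)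
          => ((k : ℤ), (k : ℤ)))
      · intro a b hab
        simp only [Prod.mk.injEq] at hab
        exact Subtype.ext hab.1
      · intro kl hkl
        simp only [Function.mem_support, ne_eq] at hkl
        by_cases h : kl.1 = kl.2
        · refine ⟨⟨kl.1, ?_⟩, ?_⟩
          · simp only [Function.mem_support, ne_eq]
            intro h0
            apply hkl
            simp only [if_pos h]
            rw [h] at h0 ⊢
            have : sobolevWeight α kl.2 kl.2 = (1 + 2 * (kl.2:ℝ) ^ 2) ^ α := by
              unfold sobolevWeight; ring_nf
            rw [this, h0]
          · simp [Prod.ext_iff, h]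
        · exact absurd (if_neg h) hkl
      · intro k
        have : sobolevWeight α (k : ℤ) (k : ℤ) = (1 + 2 * ((k:ℤ):ℝ) ^ 2) ^ α := by
          unfold sobolevWeight; ring_nf
        simp [this]
    rw [hdiag]
    have : (fun t : ℝ => ∑' kl : ℤ × ℤ, sobolevWeight α kl.1 kl.2 * ‖F t kl.1 kl.2‖ ^ 2)
        =ᶠ[atTop] (fun t : ℝ => ∑' kl : ℤ × ℤ,
          sobolevWeight α kl.1 kl.2 * ‖f0 kl.1 kl.2‖ ^ 2 * Real.exp (c kl.1 kl.2 * t)) := by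
      filter_upwards with t
      exact tsum_congr fun kl => hterm t kl.1 kl.2
    rw [Filter.tendsto_congr' this]
    apply tendsto_tsum_of_dominated_convergence hf0
    · intro kl
      by_cases h : kl.1 = kl.2
      · have hc0 : c kl.1 kl.2 = 0 := by simp [hc, h]
        simp only [hc0, zero_mul, Real.exp_zero, mul_one, if_pos h]
        exact tendsto_const_nhds
      · simp only [if_neg h]
        have hcneg : c kl.1 kl.2 < 0 := by
          have : lam kl.1 ≠ lam kl.2 := fun he => h (hlam he)
          have : ‖lam kl.1 - lam kl.2‖ ≠ 0 := by
            simpa [sub_eq_zero] using this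
          have h2 : 0 < ‖lam kl.1 - lam kl.2‖ ^ 2 := by positivity
          simpa [hc] using h2
        have : Tendsto (fun t : ℝ => Real.exp (c kl.1 kl.2 * t)) atTop (nhds 0) := by
          apply Real.tendsto_exp_atBot.comp
          exact Tendsto.const_mul_atTop_of_neg hcneg tendsto_id
        have h3 := this.const_mul (sobolevWeight α kl.1 kl.2 * ‖f0 kl.1 kl.2‖ ^ 2)
        rw [mul_zero] at h3
        exact h3
    · filter_upwards [eventually_ge_atTop (0:ℝ)] with t ht kl
      rw [Real.norm_of_nonneg (hnn t kl.1 kl.2)]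
      exact hle ht kl.1 kl.2
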